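/- Let n be even, n ≥ 2, and let m = v₂(n) be the exponent of the largest power of 2 dividing n. Then: (1) the order of a Sylow 2-subgroup of A_n equals 2^(m-1) times the order of a Sylow 2-subgroup of S_{n-1}; and (2) a Sylow 2-subgroup of S_{n-1} is isomorphic to a subgroup of a Sylow 2-subgroup of A_n (there is an injective group homomorphism from a Sylow 2-subgroup of S_{n-1} into a Sylow 2-subgroup of A_n). -/

import Mathlib

open Equiv Equiv.Perm Pointwise Nat

private lemma sylow_embed_aux {G : Type*} [Group G] [Finite G] {p : ℕ} [Fact p.Prime]
    (P : Sylow p G) {H : Type*} [Group H] (hH : IsPGroup p H) (f : H →* G)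
    (hf : Function.Injective f) : ∃ g : H →* ↥(P : Subgroup G), Function.Injective g := by
  have hrange : IsPGroup p f.range := hH.of_surjective f.rangeRestrict f.rangeRestrict_surjective
  obtain ⟨P', hP'⟩ := hrange.exists_le_sylow
  obtain ⟨g, hg⟩ := MulAction.exists_smul_eq G P' P
  have hmem : ∀ h : H, (MulAut.conj g) (f h) ∈ (P : Subgroup G) := by
    intro h
    have h1 : f h ∈ (P' : Subgroup G) := hP' ⟨h, rfl⟩
    have h2 : (MulAut.conj g) (f h) ∈ MulAut.conj g • (P' : Subgroup G) :=
      Subgroup.smul_mem_pointwise_smul _ _ _ h1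
    rwa [← Sylow.pointwise_smul_def, ← Sylow.smul_def, hg] at h2
  refine ⟨MonoidHom.codRestrict ((MulAut.conj g).toMonoidHom.comp f) _ hmem, ?_⟩
  intro x y hxy
  exact hf ((MulAut.conj g).injective (Subtype.ext_iff.mp hxy))

private lemma embed_alt (n : ℕ) (hn : 2 ≤ n) (heven : Even n)
    (Q : Sylow 2 (Equiv.Perm (Fin (n - 1)))) :
    ∃ f : ↥Q →* ↥(alternatingGroup (Fin n)), Function.Injective f := by
  classical
  have hodd : ¬ (2 : ℕ) ∣ Nat.card (Fin (n - 1)) := by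
    simp only [Nat.card_eq_fintype_card, Fintype.card_fin]
    obtain ⟨k, hk⟩ := heven; omega
  obtain ⟨x, hx⟩ := Q.isPGroup'.nonempty_fixed_point_of_prime_not_dvd_card (Fin (n - 1)) hodd
  have hx' : ∀ σ : ↥Q, (σ : Perm (Fin (n - 1))) x = x := fun σ => hx σ
  set ι : Fin (n - 1) ↪ Fin n := Fin.castLEEmb (Nat.sub_le n 1) with hι
  set e : Perm (Fin (n - 1)) →* Perm (Fin n) := Equiv.Perm.viaEmbeddingHom ι with he
  have hsign : ∀ σ : Perm (Fin (n - 1)), sign (e σ) = sign σ := by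
    intro σ
    rw [he, Equiv.Perm.viaEmbeddingHom_apply]
    unfold Equiv.Perm.viaEmbedding
    rw [Equiv.Perm.sign_extendDomain]
  set a : Fin n := ι x with ha
  set b : Fin n := ⟨n - 1, by omega⟩ with hb
  have hab : a ≠ b := by
    intro h
    have h2 := congrArg Fin.val h
    simp only [ha, hb, hι, Fin.castLEEmb_apply, Fin.coe_castLE] at h2
    exact absurd h2 (Nat.ne_of_lt x.isLt)
  have hbr : b ∉ Set.range ι := by
    rintro ⟨y, hy⟩
    have h2 := congrArg Fin.val hy
    simp only [hb, hι, Fin.castLEEmb_apply, Fin.coe_castLE] at h2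
    exact absurd h2 (Nat.ne_of_lt y.isLt)
  have hea : ∀ σ : ↥Q, e (σ : Perm (Fin (n - 1))) a = a := by
    intro σ
    rw [ha, he, Equiv.Perm.viaEmbeddingHom_apply, Equiv.Perm.viaEmbedding_apply, hx' σ]
  have heb : ∀ σ : ↥Q, e (σ : Perm (Fin (n - 1))) b = b := by
    intro σ
    rw [he, Equiv.Perm.viaEmbeddingHom_apply]
    exact Equiv.Perm.viaEmbedding_apply_of_notMem _ _ b hbr
  have hcomm : ∀ σ : ↥Q,
      Equiv.swap a b * e (σ : Perm (Fin (n - 1))) = e (σ : Perm (Fin (n - 1))) * Equiv.swap a b := by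
    intro σ
    have h2 := Equiv.swap_apply_apply (e (σ : Perm (Fin (n - 1)))) a b
    rw [hea σ, heb σ] at h2
    calc Equiv.swap a b * e (σ : Perm (Fin (n - 1)))
        = (e (σ : Perm (Fin (n - 1))) * Equiv.swap a b * (e (σ : Perm (Fin (n - 1))))⁻¹) *
          e (σ : Perm (Fin (n - 1))) := by rw [← h2]
      _ = e (σ : Perm (Fin (n - 1))) * Equiv.swap a b := by simp [mul_assoc]
  set w : ↥Q → Perm (Fin n) :=
    fun σ => if sign (σ : Perm (Fin (n - 1))) = 1 then 1 else Equiv.swap a b with hw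
  have hwcomm : ∀ σ τ : ↥Q, w σ * e (τ : Perm (Fin (n - 1))) = e (τ : Perm (Fin (n - 1))) * w σ := by
    intro σ τ
    by_cases h : sign (σ : Perm (Fin (n - 1))) = 1 <;> simp [hw, h, hcomm τ]
  have hwmul : ∀ σ τ : ↥Q, w (σ * τ) = w σ * w τ := by
    intro σ τ
    rcases Int.units_eq_one_or (sign (σ : Perm (Fin (n - 1)))) with h1 | h1 <;>
      rcases Int.units_eq_one_or (sign (τ : Perm (Fin (n - 1)))) with h2 | h2 <;>
        simp [hw, Subgroup.coe_mul, map_mul, h1, h2, Equiv.swap_mul_self]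
  set f0 : ↥Q →* Perm (Fin n) :=
    { toFun := fun σ => e (σ : Perm (Fin (n - 1))) * w σ
      map_one' := by simp [hw]
      map_mul' := by
        intro σ τ
        show e (↑(σ * τ) : Perm (Fin (n - 1))) * w (σ * τ) =
          (e (σ : Perm (Fin (n - 1))) * w σ) * (e (τ : Perm (Fin (n - 1))) * w τ)
        rw [hwmul]
        have hco : ((σ * τ : ↥Q) : Perm (Fin (n - 1))) =
            (σ : Perm (Fin (n - 1))) * (τ : Perm (Fin (n - 1))) := rfl
        rw [hco, map_mul]
        exact ((show Commute (w σ) (e (τ : Perm (Fin (n - 1)))) from hwcomm σ τ).mul_mul_mul_comm (e (σ : Perm (Fin (n - 1)))) (w τ)).symm } with hf0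
  have hf0app : ∀ σ : ↥Q, f0 σ = e (σ : Perm (Fin (n - 1))) * w σ := fun _ => rfl
  have hmem : ∀ σ : ↥Q, f0 σ ∈ alternatingGroup (Fin n) := by
    intro σ
    rw [Equiv.Perm.mem_alternatingGroup, hf0app, map_mul, hsign]
    rcases Int.units_eq_one_or (sign (σ : Perm (Fin (n - 1)))) with h1 | h1 <;>
      simp [hw, h1, Equiv.Perm.sign_swap hab]
  have hinj : ∀ σ : ↥Q, f0 σ = 1 → σ = 1 := by
    intro σ hσ
    rw [hf0app] at hσ
    rcases Int.units_eq_one_or (sign (σ : Perm (Fin (n - 1)))) with h1 | h1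
    · have h2 : e (σ : Perm (Fin (n - 1))) = 1 := by simpa [hw, h1] using hσ
      have h3 : (σ : Perm (Fin (n - 1))) = 1 :=
        Equiv.Perm.viaEmbeddingHom_injective ι (by rw [← he] at *; rw [h2, map_one])
      exact Subtype.ext h3
    · exfalso
      have hws : w σ = Equiv.swap a b := by simp [hw, h1]
      have h2 : (e (σ : Perm (Fin (n - 1))) * w σ) b = b := by rw [hσ]; rfl
      rw [hws, Equiv.Perm.mul_apply, Equiv.swap_apply_right, hea σ] at h2
      exact hab h2
  exact ⟨f0.codRestrict _ hmem, fun σ τ h =>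
    (injective_iff_map_eq_one f0).mpr hinj (Subtype.ext_iff.mp h)⟩

/-- Let `n ≥ 2` be even and `m = v₂(n)` the 2-adic valuation of `n`. Then the
order of a Sylow 2-subgroup of `A_n` equals `2^(m-1)` times the order of a Sylow
2-subgroup of `S_{n-1}`, and a Sylow 2-subgroup of `S_{n-1}` embeds into a Sylow
2-subgroup of `A_n`. -/
theorem stmt_15 (n : ℕ) (hn : 2 ≤ n) (heven : Even n)
    (P : Sylow 2 (alternatingGroup (Fin n)))
    (Q : Sylow 2 (Equiv.Perm (Fin (n - 1)))) :
    Nat.card P = 2 ^ ((Nat.factorization n) 2 - 1) * Nat.card Q ∧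
      ∃ f : ↥Q →* ↥P, Function.Injective f := by
  haveI : Fact (Nat.Prime 2) := ⟨Nat.prime_two⟩
  haveI : Nontrivial (Fin n) := Fin.nontrivial_iff_two_le.mpr hn
  constructor
  · -- cardinality
    have hQ : Nat.card Q = 2 ^ (Nat.factorization (Nat.card (Equiv.Perm (Fin (n - 1))))) 2 :=
      Q.card_eq_multiplicity
    have hP : Nat.card P = 2 ^ (Nat.factorization (Nat.card (alternatingGroup (Fin n)))) 2 :=
      P.card_eq_multiplicity
    have hcardQG : Nat.card (Equiv.Perm (Fin (n - 1))) = (n - 1)! := by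
      simp [Nat.card_eq_fintype_card, Fintype.card_perm, Fintype.card_fin]
    have hcardA : 2 * Nat.card (alternatingGroup (Fin n)) = n ! := by
      rw [Nat.card_eq_fintype_card, two_mul_card_alternatingGroup, Fintype.card_perm,
        Fintype.card_fin]
    have hA0 : Nat.card (alternatingGroup (Fin n)) ≠ 0 := Nat.card_pos.ne'
    have hfac : 1 + (Nat.factorization (Nat.card (alternatingGroup (Fin n)))) 2 =
        (Nat.factorization (n !)) 2 := by
      rw [← hcardA, Nat.factorization_mul two_ne_zero hA0]
      simp [Nat.Prime.factorization_self Nat.prime_two]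
    have hfacn : (Nat.factorization (n !)) 2 =
        (Nat.factorization n) 2 + (Nat.factorization ((n - 1)!)) 2 := by
      rw [← Nat.mul_factorial_pred (by omega : n ≠ 0),
        Nat.factorization_mul (by omega) (Nat.factorial_ne_zero _)]
      simp
    have hm1 : 1 ≤ (Nat.factorization n) 2 :=
      Nat.Prime.factorization_pos_of_dvd Nat.prime_two (by omega) heven.two_dvd
    rw [hP, hQ, hcardQG, ← pow_add]
    congr 1
    omega
  · -- embedding
    obtain ⟨f, hf⟩ := embed_alt n hn heven Q
    exact sylow_embed_aux P Q.isPGroup' f hf
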